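/- Suppose for every min-player profile y and max-player profile z there is a function V(y,z) : S → ℝ that is a fixed point of the soft min–max Bellman operator, i.e. T_{y,z,h}(V(y,z)) = V(y,z). Let ρ ∈ Δ(S) satisfy ρ s > 0 for all s, and write V(y,z)(ρ) = ∑_{s} ρ s · V(y,z)(s). Then there exists a unique pair of profiles (y*, z*) such that V(y*, z)(ρ) ≤ V(y*, z*)(ρ) ≤ V(y, z*)(ρ) for all profiles y and z; moreover V(y*, z*)(ρ) = ⨅_{y} ⨆_{z} V(y,z)(ρ) = ⨆_{z} ⨅_{y} V(y,z)(ρ), where the infimum and supremum range over all min-player and max-player profiles respectively. -/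

import Mathlib

open scoped BigOperators

noncomputable section

variable {S A B : Type*} [Fintype S] [Fintype A] [Fintype B]

/-- Regularized Q-value. -/
def QV (r : S → A → B → ℝ) (P : S → A → B → S → ℝ) (γ : ℝ)
    (V : S → ℝ) (s : S) (a : A) (b : B) : ℝ :=
  r s a b + γ * ∑ s', P s a b s' * V s'

/-- Min–max Bellman operator for a fixed policy pair. -/
def Tyz (r : S → A → B → ℝ) (P : S → A → B → S → ℝ) (γ : ℝ)
    (y : S → A → ℝ) (z : S → B → ℝ) (V : S → ℝ) (s : S) : ℝ :=
  ∑ a, ∑ b, y s a * z s b * QV r P γ V s a b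

/-- Soft min–max Bellman operator. -/
def Tsoft (r : S → A → B → ℝ) (P : S → A → B → S → ℝ) (γ : ℝ)
    (h : S → (A → ℝ) → (B → ℝ) → ℝ)
    (y : S → A → ℝ) (z : S → B → ℝ) (V : S → ℝ) (s : S) : ℝ :=
  Tyz r P γ y z V s + h s (y s) (z s)

/-- Min-player profiles: a mixed strategy at each state. -/
def MinProf (S A : Type*) [Fintype A] : Type _ :=
  {y : S → A → ℝ // ∀ s, y s ∈ stdSimplex ℝ A}

/-- Max-player profiles: a mixed strategy at each state. -/
def MaxProf (S B : Type*) [Fintype B] : Type _ :=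
  {z : S → B → ℝ // ∀ s, z s ∈ stdSimplex ℝ B}

namespace RegAux

lemma real_le_of_forall_pos_le_add {a b : ℝ} (h : ∀ ε : ℝ, 0 < ε → a ≤ b + ε) : a ≤ b := by
  by_contra hc
  push_neg at hc
  have := h ((a - b)/2) (by linarith)
  linarith

/-- One-shot regularized game payoff at state `s` given continuation value `V`. -/
def G (r : S → A → B → ℝ) (P : S → A → B → S → ℝ) (γ : ℝ)
    (h : S → (A → ℝ) → (B → ℝ) → ℝ) (V : S → ℝ) (s : S) (u : A → ℝ) (w : B → ℝ) : ℝ :=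
  ∑ a, ∑ b, u a * w b * QV r P γ V s a b + h s u w

lemma sum_sum_weight_eq_one {u : A → ℝ} {w : B → ℝ} (hu : u ∈ stdSimplex ℝ A)
    (hw : w ∈ stdSimplex ℝ B) : ∑ a, ∑ b, u a * w b = 1 := by
  rw [← Finset.sum_mul_sum, hu.2, hw.2, one_mul]

lemma sum_sum_mul_const (u : A → ℝ) (w : B → ℝ) (c : ℝ) :
    ∑ a, ∑ b, u a * w b * c = (∑ a, ∑ b, u a * w b) * c := by
  rw [Finset.sum_mul]
  exact Finset.sum_congr rfl fun a _ => (Finset.sum_mul _ _ _).symm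

lemma G_diff_le (r : S → A → B → ℝ) (P : S → A → B → S → ℝ) {γ : ℝ}
    (hP0 : ∀ s a b s', 0 ≤ P s a b s') (hP1 : ∀ s a b, ∑ s', P s a b s' = 1)
    (hγ0 : 0 ≤ γ) (h : S → (A → ℝ) → (B → ℝ) → ℝ) {u : A → ℝ} {w : B → ℝ}
    (hu : u ∈ stdSimplex ℝ A) (hw : w ∈ stdSimplex ℝ B) {V W : S → ℝ} {d : ℝ}
    (hd : ∀ s', V s' - W s' ≤ d) (s : S) :
    G r P γ h V s u w - G r P γ h W s u w ≤ γ * d := by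
  have key : ∀ a b, QV r P γ V s a b - QV r P γ W s a b ≤ γ * d := by
    intro a b
    have h1 : (∑ s', P s a b s' * V s') - ∑ s', P s a b s' * W s'
        = ∑ s', P s a b s' * (V s' - W s') := by
      rw [← Finset.sum_sub_distrib]
      exact Finset.sum_congr rfl fun s' _ => by ring
    have h2 : ∑ s', P s a b s' * (V s' - W s') ≤ ∑ s', P s a b s' * d :=
      Finset.sum_le_sum fun s' _ => mul_le_mul_of_nonneg_left (hd s') (hP0 s a b s')
    have h3 : ∑ s', P s a b s' * d = d := by rw [← Finset.sum_mul, hP1 s a b, one_mul]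
    have hXY : (∑ s', P s a b s' * V s') - ∑ s', P s a b s' * W s' ≤ d := by
      rw [h1]; rw [h3] at h2; exact h2
    have := mul_le_mul_of_nonneg_left hXY hγ0
    simp only [QV]
    linarith [this]
  have expand : G r P γ h V s u w - G r P γ h W s u w
      = ∑ a, ∑ b, u a * w b * (QV r P γ V s a b - QV r P γ W s a b) := by
    simp only [G]
    rw [show (∑ a, ∑ b, u a * w b * QV r P γ V s a b + h s u w)
        - (∑ a, ∑ b, u a * w b * QV r P γ W s a b + h s u w)
        = (∑ a, ∑ b, u a * w b * QV r P γ V s a b)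
          - (∑ a, ∑ b, u a * w b * QV r P γ W s a b) by ring]
    rw [← Finset.sum_sub_distrib]
    refine Finset.sum_congr rfl fun a _ => ?_
    rw [← Finset.sum_sub_distrib]
    exact Finset.sum_congr rfl fun b _ => by ring
  rw [expand]
  calc ∑ a, ∑ b, u a * w b * (QV r P γ V s a b - QV r P γ W s a b)
      ≤ ∑ a, ∑ b, u a * w b * (γ * d) :=
        Finset.sum_le_sum fun a _ => Finset.sum_le_sum fun b _ =>
          mul_le_mul_of_nonneg_left (key a b) (mul_nonneg (hu.1 a) (hw.1 b))
    _ = (∑ a, ∑ b, u a * w b) * (γ * d) := sum_sum_mul_const u w _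
    _ = γ * d := by rw [sum_sum_weight_eq_one hu hw, one_mul]

lemma bilin_comb_u (q : A → B → ℝ) (w : B → ℝ) (x y : A → ℝ) (c e : ℝ) :
    ∑ a, ∑ b, (c • x + e • y) a * w b * q a b
      = c * (∑ a, ∑ b, x a * w b * q a b) + e * (∑ a, ∑ b, y a * w b * q a b) := by
  rw [Finset.mul_sum, Finset.mul_sum, ← Finset.sum_add_distrib]
  refine Finset.sum_congr rfl fun a _ => ?_
  rw [Finset.mul_sum, Finset.mul_sum, ← Finset.sum_add_distrib]
  refine Finset.sum_congr rfl fun b _ => ?_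
  simp only [Pi.add_apply, Pi.smul_apply, smul_eq_mul]
  ring

lemma bilin_comb_w (q : A → B → ℝ) (u : A → ℝ) (x y : B → ℝ) (c e : ℝ) :
    ∑ a, ∑ b, u a * (c • x + e • y) b * q a b
      = c * (∑ a, ∑ b, u a * x b * q a b) + e * (∑ a, ∑ b, u a * y b * q a b) := by
  rw [Finset.mul_sum, Finset.mul_sum, ← Finset.sum_add_distrib]
  refine Finset.sum_congr rfl fun a _ => ?_
  rw [Finset.mul_sum, Finset.mul_sum, ← Finset.sum_add_distrib]
  refine Finset.sum_congr rfl fun b _ => ?_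
  simp only [Pi.add_apply, Pi.smul_apply, smul_eq_mul]
  ring

lemma G_comb_u (r : S → A → B → ℝ) (P : S → A → B → S → ℝ) (γ : ℝ)
    (h : S → (A → ℝ) → (B → ℝ) → ℝ) {μ₁ : ℝ} {s : S} {w : B → ℝ}
    (hconv : StrongConvexOn (stdSimplex ℝ A) μ₁ (fun u => h s u w)) (V : S → ℝ)
    {x y : A → ℝ} (hx : x ∈ stdSimplex ℝ A) (hy : y ∈ stdSimplex ℝ A)
    {c e : ℝ} (hc : 0 ≤ c) (he : 0 ≤ e) (hce : c + e = 1) :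
    G r P γ h V s (c • x + e • y) w
      ≤ c * G r P γ h V s x w + e * G r P γ h V s y w - c*e*(μ₁/2*‖x - y‖^2) := by
  have hh := hconv.2 hx hy hc he hce
  simp only [smul_eq_mul] at hh
  simp only [G]
  rw [bilin_comb_u]
  linarith [hh]

lemma G_comb_w (r : S → A → B → ℝ) (P : S → A → B → S → ℝ) (γ : ℝ)
    (h : S → (A → ℝ) → (B → ℝ) → ℝ) {μ₂ : ℝ} {s : S} {u : A → ℝ}
    (hconc : StrongConcaveOn (stdSimplex ℝ B) μ₂ (fun w => h s u w)) (V : S → ℝ)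
    {x y : B → ℝ} (hx : x ∈ stdSimplex ℝ B) (hy : y ∈ stdSimplex ℝ B)
    {c e : ℝ} (hc : 0 ≤ c) (he : 0 ≤ e) (hce : c + e = 1) :
    c * G r P γ h V s u x + e * G r P γ h V s u y + c*e*(μ₂/2*‖x - y‖^2)
      ≤ G r P γ h V s u (c • x + e • y) := by
  have hh := hconc.2 hx hy hc he hce
  simp only [smul_eq_mul] at hh
  simp only [G]
  rw [bilin_comb_w]
  linarith [hh]

lemma G_growth_u (r : S → A → B → ℝ) (P : S → A → B → S → ℝ) (γ : ℝ)
    (h : S → (A → ℝ) → (B → ℝ) → ℝ) {μ₁ : ℝ} {s : S} {w : B → ℝ}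
    (hconv : StrongConvexOn (stdSimplex ℝ A) μ₁ (fun u => h s u w)) (V : S → ℝ)
    {x y : A → ℝ} (hx : x ∈ stdSimplex ℝ A) (hy : y ∈ stdSimplex ℝ A)
    (hmin : ∀ u' ∈ stdSimplex ℝ A, G r P γ h V s y w ≤ G r P γ h V s u' w) :
    μ₁/4 * ‖x - y‖^2 ≤ G r P γ h V s x w - G r P γ h V s y w := by
  have hmem : (1/2 : ℝ) • x + (1/2 : ℝ) • y ∈ stdSimplex ℝ A :=
    (convex_stdSimplex ℝ A) hx hy (by norm_num) (by norm_num) (by norm_num)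
  have h1 := G_comb_u r P γ h hconv V hx hy (c := 1/2) (e := 1/2)
    (by norm_num) (by norm_num) (by norm_num)
  have h2 := hmin _ hmem
  nlinarith [h1, h2]

lemma G_growth_w (r : S → A → B → ℝ) (P : S → A → B → S → ℝ) (γ : ℝ)
    (h : S → (A → ℝ) → (B → ℝ) → ℝ) {μ₂ : ℝ} {s : S} {u : A → ℝ}
    (hconc : StrongConcaveOn (stdSimplex ℝ B) μ₂ (fun w => h s u w)) (V : S → ℝ)
    {x y : B → ℝ} (hx : x ∈ stdSimplex ℝ B) (hy : y ∈ stdSimplex ℝ B)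
    (hmax : ∀ w' ∈ stdSimplex ℝ B, G r P γ h V s u w' ≤ G r P γ h V s u y) :
    μ₂/4 * ‖x - y‖^2 ≤ G r P γ h V s u y - G r P γ h V s u x := by
  have hmem : (1/2 : ℝ) • x + (1/2 : ℝ) • y ∈ stdSimplex ℝ B :=
    (convex_stdSimplex ℝ B) hx hy (by norm_num) (by norm_num) (by norm_num)
  have h1 := G_comb_w r P γ h hconc V hx hy (c := 1/2) (e := 1/2)
    (by norm_num) (by norm_num) (by norm_num)
  have h2 := hmax _ hmem
  nlinarith [h1, h2]

lemma G_cont (r : S → A → B → ℝ) (P : S → A → B → S → ℝ) (γ : ℝ)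
    (h : S → (A → ℝ) → (B → ℝ) → ℝ) {s : S}
    (hcont : Continuous (fun p : (A → ℝ) × (B → ℝ) => h s p.1 p.2)) (V : S → ℝ) :
    Continuous (fun p : (A → ℝ) × (B → ℝ) => G r P γ h V s p.1 p.2) := by
  refine Continuous.add ?_ hcont
  exact continuous_finset_sum _ fun a _ => continuous_finset_sum _ fun b _ =>
    (((continuous_apply a).comp continuous_fst).mul
      ((continuous_apply b).comp continuous_snd)).mul continuous_const

lemma G_abs_le (r : S → A → B → ℝ) (P : S → A → B → S → ℝ)
    (hP0 : ∀ s a b s', 0 ≤ P s a b s') (hP1 : ∀ s a b, ∑ s', P s a b s' = 1)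
    {γ : ℝ} (hγ0 : 0 ≤ γ) (h : S → (A → ℝ) → (B → ℝ) → ℝ)
    {Vf : S → ℝ} {s : S} {u : A → ℝ} {w : B → ℝ} {m R H : ℝ}
    (hu : u ∈ stdSimplex ℝ A) (hw : w ∈ stdSimplex ℝ B)
    (hm : ∀ s', |Vf s'| ≤ m) (hR : ∀ a b, |r s a b| ≤ R) (hH : |h s u w| ≤ H) :
    |G r P γ h Vf s u w| ≤ R + γ * m + H := by
  have hQ : ∀ a b, |QV r P γ Vf s a b| ≤ R + γ * m := by
    intro a b
    have h1 : |∑ s', P s a b s' * Vf s'| ≤ m := by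
      refine le_trans (Finset.abs_sum_le_sum_abs _ _) ?_
      calc ∑ s', |P s a b s' * Vf s'| ≤ ∑ s', P s a b s' * m :=
            Finset.sum_le_sum fun s' _ => by
              rw [abs_mul, abs_of_nonneg (hP0 s a b s')]
              exact mul_le_mul_of_nonneg_left (hm s') (hP0 s a b s')
        _ = m := by rw [← Finset.sum_mul, hP1 s a b, one_mul]
    calc |QV r P γ Vf s a b| = |r s a b + γ * ∑ s', P s a b s' * Vf s'| := rfl
      _ ≤ |r s a b| + |γ * ∑ s', P s a b s' * Vf s'| := abs_add_le _ _
      _ ≤ R + γ * m := by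
          rw [abs_mul, abs_of_nonneg hγ0]
          exact add_le_add (hR a b) (mul_le_mul_of_nonneg_left h1 hγ0)
  have hsum : |∑ a, ∑ b, u a * w b * QV r P γ Vf s a b| ≤ R + γ * m := by
    refine le_trans (Finset.abs_sum_le_sum_abs _ _) ?_
    calc ∑ a, |∑ b, u a * w b * QV r P γ Vf s a b|
        ≤ ∑ a, ∑ b, |u a * w b * QV r P γ Vf s a b| :=
          Finset.sum_le_sum fun a _ => Finset.abs_sum_le_sum_abs _ _
      _ ≤ ∑ a, ∑ b, u a * w b * (R + γ * m) :=
          Finset.sum_le_sum fun a _ => Finset.sum_le_sum fun b _ => by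
            rw [abs_mul, abs_mul, abs_of_nonneg (hu.1 a), abs_of_nonneg (hw.1 b)]
            exact mul_le_mul_of_nonneg_left (hQ a b) (mul_nonneg (hu.1 a) (hw.1 b))
      _ = R + γ * m := by
          rw [sum_sum_mul_const, sum_sum_weight_eq_one hu hw, one_mul]
  calc |G r P γ h Vf s u w| ≤ |∑ a, ∑ b, u a * w b * QV r P γ Vf s a b| + |h s u w| :=
        abs_add_le _ _
    _ ≤ (R + γ * m) + H := add_le_add hsum hH
    _ = R + γ * m + H := by ring

lemma le_fix [Nonempty S] (r : S → A → B → ℝ) (P : S → A → B → S → ℝ)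
    (hP0 : ∀ s a b s', 0 ≤ P s a b s') (hP1 : ∀ s a b, ∑ s', P s a b s' = 1)
    {γ : ℝ} (hγ0 : 0 ≤ γ) (hγ1 : γ < 1) (h : S → (A → ℝ) → (B → ℝ) → ℝ)
    {y : S → A → ℝ} {z : S → B → ℝ}
    (hy : ∀ s, y s ∈ stdSimplex ℝ A) (hz : ∀ s, z s ∈ stdSimplex ℝ B)
    {Vf W : S → ℝ} (hVf : ∀ s, G r P γ h Vf s (y s) (z s) = Vf s)
    (hW : ∀ s, W s ≤ G r P γ h W s (y s) (z s)) : ∀ s, W s ≤ Vf s := by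
  obtain ⟨s₀, -, hs₀⟩ := Finset.exists_max_image Finset.univ (fun s => W s - Vf s)
    ⟨Classical.arbitrary S, Finset.mem_univ _⟩
  have hd : ∀ s, W s - Vf s ≤ W s₀ - Vf s₀ := fun s => hs₀ s (Finset.mem_univ s)
  have hdiff := G_diff_le r P hP0 hP1 hγ0 h (hy s₀) (hz s₀) hd s₀
  have h1 := hW s₀
  have h2 := hVf s₀
  have hkey : W s₀ - Vf s₀ ≤ γ * (W s₀ - Vf s₀) := by linarith
  have hd0 : W s₀ - Vf s₀ ≤ 0 := by nlinarith [hkey]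
  intro s
  have := hd s
  linarith

lemma fix_le [Nonempty S] (r : S → A → B → ℝ) (P : S → A → B → S → ℝ)
    (hP0 : ∀ s a b s', 0 ≤ P s a b s') (hP1 : ∀ s a b, ∑ s', P s a b s' = 1)
    {γ : ℝ} (hγ0 : 0 ≤ γ) (hγ1 : γ < 1) (h : S → (A → ℝ) → (B → ℝ) → ℝ)
    {y : S → A → ℝ} {z : S → B → ℝ}
    (hy : ∀ s, y s ∈ stdSimplex ℝ A) (hz : ∀ s, z s ∈ stdSimplex ℝ B)
    {Vf W : S → ℝ} (hVf : ∀ s, G r P γ h Vf s (y s) (z s) = Vf s)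
    (hW : ∀ s, G r P γ h W s (y s) (z s) ≤ W s) : ∀ s, Vf s ≤ W s := by
  obtain ⟨s₀, -, hs₀⟩ := Finset.exists_max_image Finset.univ (fun s => Vf s - W s)
    ⟨Classical.arbitrary S, Finset.mem_univ _⟩
  have hd : ∀ s, Vf s - W s ≤ Vf s₀ - W s₀ := fun s => hs₀ s (Finset.mem_univ s)
  have hdiff := G_diff_le r P hP0 hP1 hγ0 h (hy s₀) (hz s₀) hd s₀
  have h1 := hW s₀
  have h2 := hVf s₀
  have hkey : Vf s₀ - W s₀ ≤ γ * (Vf s₀ - W s₀) := by linarith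
  have hd0 : Vf s₀ - W s₀ ≤ 0 := by nlinarith [hkey]
  intro s
  have := hd s
  linarith


set_option maxHeartbeats 1000000 in
lemma exists_saddle [Nonempty A] [Nonempty B]
    (r : S → A → B → ℝ) (P : S → A → B → S → ℝ) (γ : ℝ)
    (h : S → (A → ℝ) → (B → ℝ) → ℝ)
    (hcont : ∀ s, Continuous (fun p : (A → ℝ) × (B → ℝ) => h s p.1 p.2))
    {μ₁ μ₂ : ℝ} (hμ₁ : 0 < μ₁) (hμ₂ : 0 < μ₂)
    (hconv : ∀ s, ∀ w ∈ stdSimplex ℝ B,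
      StrongConvexOn (stdSimplex ℝ A) μ₁ (fun u => h s u w))
    (hconc : ∀ s, ∀ u ∈ stdSimplex ℝ A,
      StrongConcaveOn (stdSimplex ℝ B) μ₂ (fun w => h s u w))
    (V : S → ℝ) (s : S) :
    ∃ p : (A → ℝ) × (B → ℝ), p.1 ∈ stdSimplex ℝ A ∧ p.2 ∈ stdSimplex ℝ B ∧
      (∀ u' ∈ stdSimplex ℝ A, G r P γ h V s p.1 p.2 ≤ G r P γ h V s u' p.2) ∧
      (∀ w' ∈ stdSimplex ℝ B, G r P γ h V s p.1 w' ≤ G r P γ h V s p.1 p.2) := by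
  classical
  have hKA : (stdSimplex ℝ A).Nonempty := ⟨_, single_mem_stdSimplex ℝ (Classical.arbitrary A)⟩
  have hKB : (stdSimplex ℝ B).Nonempty := ⟨_, single_mem_stdSimplex ℝ (Classical.arbitrary B)⟩
  have hGc : Continuous (fun p : (A → ℝ) × (B → ℝ) => G r P γ h V s p.1 p.2) :=
    G_cont r P γ h (hcont s) V
  have hBR : ∀ w ∈ stdSimplex ℝ B, ∃ u, u ∈ stdSimplex ℝ A ∧
      ∀ u' ∈ stdSimplex ℝ A, G r P γ h V s u w ≤ G r P γ h V s u' w := by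
    intro w hw
    have hc : ContinuousOn (fun u => G r P γ h V s u w) (stdSimplex ℝ A) :=
      (hGc.comp (continuous_id.prodMk continuous_const)).continuousOn
    obtain ⟨u, hu, hmin⟩ := (isCompact_stdSimplex ℝ A).exists_isMinOn hKA hc
    exact ⟨u, hu, fun u' hu' => (isMinOn_iff.mp hmin) u' hu'⟩
  have hbw : ∃ bw : (B → ℝ) → (A → ℝ), ∀ w, w ∈ stdSimplex ℝ B →
      (bw w ∈ stdSimplex ℝ A ∧
        ∀ u' ∈ stdSimplex ℝ A, G r P γ h V s (bw w) w ≤ G r P γ h V s u' w) := by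
    choose bw0 h1 h2 using hBR
    refine ⟨fun w => if hw : w ∈ stdSimplex ℝ B then bw0 w hw else hKA.choose, fun w hw => ?_⟩
    simp only
    rw [dif_pos hw]
    exact ⟨h1 w hw, h2 w hw⟩
  obtain ⟨bw, hbw⟩ := hbw
  have hbmem : ∀ w, w ∈ stdSimplex ℝ B → bw w ∈ stdSimplex ℝ A := fun w hw => (hbw w hw).1
  have hbmin : ∀ w, w ∈ stdSimplex ℝ B →
      ∀ u' ∈ stdSimplex ℝ A, G r P γ h V s (bw w) w ≤ G r P γ h V s u' w :=
    fun w hw => (hbw w hw).2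
  have hprodK : IsCompact (stdSimplex ℝ A ×ˢ stdSimplex ℝ B) :=
    (isCompact_stdSimplex ℝ A).prod (isCompact_stdSimplex ℝ B)
  have hGuc := Metric.uniformContinuousOn_iff.mp
    (hprodK.uniformContinuousOn_of_continuous hGc.continuousOn)
  have hφcont : ContinuousOn (fun w => G r P γ h V s (bw w) w) (stdSimplex ℝ B) := by
    rw [Metric.continuousOn_iff]
    intro w hw ε hε
    obtain ⟨δ, hδ, hδ'⟩ := hGuc (ε/2) (by linarith)
    refine ⟨δ, hδ, fun w' hw' hdist => ?_⟩
    have key : ∀ v v', v ∈ stdSimplex ℝ B → v' ∈ stdSimplex ℝ B → dist v v' < δ →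
        G r P γ h V s (bw v) v ≤ G r P γ h V s (bw v') v' + ε/2 := by
      intro v v' hv hv' hd
      have h1 : G r P γ h V s (bw v) v ≤ G r P γ h V s (bw v') v :=
        hbmin v hv _ (hbmem v' hv')
      have h2 := hδ' (bw v', v) (Set.mk_mem_prod (hbmem v' hv') hv)
        (bw v', v') (Set.mk_mem_prod (hbmem v' hv') hv')
        (by rw [Prod.dist_eq, dist_self]; exact max_lt hδ hd)
      rw [Real.dist_eq] at h2
      have h3 := abs_lt.mp h2
      linarith [h3.1, h3.2]
    have k1 := key w' w hw' hw hdist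
    have k2 := key w w' hw hw' (by rw [dist_comm]; exact hdist)
    rw [Real.dist_eq, abs_sub_lt_iff]
    constructor <;> linarith
  obtain ⟨wst, hwstB, hwstmax⟩ := (isCompact_stdSimplex ℝ B).exists_isMaxOn hKB hφcont
  have hmax : ∀ v ∈ stdSimplex ℝ B,
      G r P γ h V s (bw v) v ≤ G r P γ h V s (bw wst) wst :=
    fun v hv => (isMaxOn_iff.mp hwstmax) v hv
  obtain ⟨C0, hC0⟩ := hprodK.exists_bound_of_continuousOn hGc.continuousOn
  have hCb : ∀ u w, u ∈ stdSimplex ℝ A → w ∈ stdSimplex ℝ B → |G r P γ h V s u w| ≤ C0 := by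
    intro u w hu hw
    have := hC0 (u, w) (Set.mk_mem_prod hu hw)
    rwa [Real.norm_eq_abs] at this
  have hC0nn : 0 ≤ C0 :=
    le_trans (abs_nonneg _) (hCb _ _ (hbmem wst hwstB) hwstB)
  refine ⟨(bw wst, wst), hbmem wst hwstB, hwstB, hbmin wst hwstB, ?_⟩
  intro w hwB
  apply real_le_of_forall_pos_le_add
  intro ε hε
  have hcu : Continuous fun u => G r P γ h V s u w :=
    hGc.comp (continuous_id.prodMk continuous_const)
  obtain ⟨δ, hδpos, hδ⟩ := Metric.continuous_iff.mp hcu (bw wst) ε hε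
  set t := min (1/2 : ℝ) (μ₁ * δ^2 / (32 * (C0 + 1))) with htdef
  have ht0 : 0 < t := lt_min (by norm_num) (by positivity)
  have ht1 : t ≤ 1/2 := min_le_left _ _
  have ht2 : t ≤ μ₁ * δ^2 / (32 * (C0 + 1)) := min_le_right _ _
  set wt := (1 - t) • wst + t • w with hwtdef
  have hwtB : wt ∈ stdSimplex ℝ B :=
    (convex_stdSimplex ℝ B) hwstB hwB (by linarith) ht0.le (by ring)
  have hutA : bw wt ∈ stdSimplex ℝ A := hbmem wt hwtB
  have e2 := G_comb_w r P γ h (hconc s (bw wt) hutA) V hwstB hwB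
    (c := 1 - t) (e := t) (by linarith) ht0.le (by ring)
  have e1 : G r P γ h V s (bw wt) wt ≤ G r P γ h V s (bw wst) wst := hmax wt hwtB
  have e3 : G r P γ h V s (bw wst) wst ≤ G r P γ h V s (bw wt) wst :=
    hbmin wst hwstB _ hutA
  have hq : 0 ≤ (1-t)*t*(μ₂/2*‖wst - w‖^2) := by
    have h1 : (0:ℝ) ≤ 1 - t := by linarith
    have h2 : (0:ℝ) ≤ μ₂/2*‖wst - w‖^2 := by positivity
    positivity
  have key1 : G r P γ h V s (bw wt) w ≤ G r P γ h V s (bw wst) wst := by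
    have prod1 : (1-t) * G r P γ h V s (bw wst) wst ≤ (1-t) * G r P γ h V s (bw wt) wst :=
      mul_le_mul_of_nonneg_left e3 (by linarith)
    have k : t * G r P γ h V s (bw wt) w ≤ t * G r P γ h V s (bw wst) wst := by
      nlinarith [e1, e2, hq, prod1]
    exact le_of_mul_le_mul_left k ht0
  have key2 : G r P γ h V s (bw wt) wst - G r P γ h V s (bw wst) wst ≤ 4*(C0+1)*t := by
    have b1 := abs_le.mp (hCb _ _ hutA hwB)
    have b2 := abs_le.mp (hCb _ _ (hbmem wst hwstB) hwstB)
    have step : (1 - t) * (G r P γ h V s (bw wt) wst - G r P γ h V s (bw wst) wst)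
        ≤ t * (G r P γ h V s (bw wst) wst - G r P γ h V s (bw wt) w) := by
      nlinarith [e1, e2, hq]
    have p1 : (1/2 : ℝ) * (G r P γ h V s (bw wt) wst - G r P γ h V s (bw wst) wst)
        ≤ (1 - t) * (G r P γ h V s (bw wt) wst - G r P γ h V s (bw wst) wst) :=
      mul_le_mul_of_nonneg_right (by linarith) (by linarith [e3])
    have p2 : t * (G r P γ h V s (bw wst) wst - G r P γ h V s (bw wt) w) ≤ t * (2*C0) :=
      mul_le_mul_of_nonneg_left (by linarith [b1.1, b2.2]) ht0.le
    nlinarith [step, p1, p2, ht0]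
  have growth := G_growth_u r P γ h (hconv s wst hwstB) V hutA (hbmem wst hwstB)
    (hbmin wst hwstB)
  have hnorm2 : ‖bw wt - bw wst‖^2 < δ^2 := by
    have h1 : μ₁/4 * ‖bw wt - bw wst‖^2 ≤ 4*(C0+1)*t := le_trans growth key2
    have h2 : 4*(C0+1)*t ≤ 4*(C0+1)*(μ₁ * δ^2 / (32*(C0+1))) :=
      mul_le_mul_of_nonneg_left ht2 (by linarith)
    have h3 : 4*(C0+1)*(μ₁ * δ^2 / (32*(C0+1))) = μ₁*δ^2/8 := by
      field_simp
      ring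
    have h4 : μ₁/4 * ‖bw wt - bw wst‖^2 ≤ μ₁*δ^2/8 := by
      rw [← h3]; exact le_trans h1 h2
    have h5 : ‖bw wt - bw wst‖^2 ≤ δ^2/2 := by nlinarith [h4, hμ₁]
    have h6 : (0:ℝ) < δ^2 := pow_pos hδpos 2
    linarith
  have hdistu : dist (bw wt) (bw wst) < δ := by
    rw [dist_eq_norm]
    nlinarith [norm_nonneg (bw wt - bw wst), hδpos, hnorm2]
  have hclose := hδ (bw wt) hdistu
  rw [Real.dist_eq] at hclose
  have hfin := (abs_lt.mp hclose).1
  linarith [key1]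

end RegAux

set_option maxHeartbeats 2000000 in
theorem unique_equilibrium_of_regularized_game
    [Nonempty S] [Nonempty A] [Nonempty B]
    (r : S → A → B → ℝ) (P : S → A → B → S → ℝ)
    (hP0 : ∀ s a b s', 0 ≤ P s a b s')
    (hP1 : ∀ s a b, ∑ s', P s a b s' = 1)
    (γ : ℝ) (hγ0 : 0 < γ) (hγ1 : γ < 1)
    (h : S → (A → ℝ) → (B → ℝ) → ℝ)
    (hcont : ∀ s, Continuous (fun p : (A → ℝ) × (B → ℝ) => h s p.1 p.2))
    (μ₁ μ₂ : ℝ) (hμ₁ : 0 < μ₁) (hμ₂ : 0 < μ₂)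
    (hconv : ∀ s, ∀ w ∈ stdSimplex ℝ B,
      StrongConvexOn (stdSimplex ℝ A) μ₁ (fun u => h s u w))
    (hconc : ∀ s, ∀ u ∈ stdSimplex ℝ A,
      StrongConcaveOn (stdSimplex ℝ B) μ₂ (fun w => h s u w))
    (V : MinProf S A → MaxProf S B → S → ℝ)
    (hfix : ∀ y z, Tsoft r P γ h y.1 z.1 (V y z) = V y z)
    (ρ : S → ℝ) (hρ : ρ ∈ stdSimplex ℝ S) (hρpos : ∀ s, 0 < ρ s) :
    (∃! p : MinProf S A × MaxProf S B,
      ∀ (y : MinProf S A) (z : MaxProf S B),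
        (∑ s, ρ s * V p.1 z s) ≤ (∑ s, ρ s * V p.1 p.2 s) ∧
        (∑ s, ρ s * V p.1 p.2 s) ≤ (∑ s, ρ s * V y p.2 s)) ∧
    (∀ p : MinProf S A × MaxProf S B,
      (∀ (y : MinProf S A) (z : MaxProf S B),
        (∑ s, ρ s * V p.1 z s) ≤ (∑ s, ρ s * V p.1 p.2 s) ∧
        (∑ s, ρ s * V p.1 p.2 s) ≤ (∑ s, ρ s * V y p.2 s)) →
      (∑ s, ρ s * V p.1 p.2 s)
          = (⨅ y : MinProf S A, ⨆ z : MaxProf S B, ∑ s, ρ s * V y z s) ∧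
      (∑ s, ρ s * V p.1 p.2 s)
          = (⨆ z : MaxProf S B, ⨅ y : MinProf S A, ∑ s, ρ s * V y z s)) := by
  classical
  have hγ0' : (0:ℝ) ≤ γ := hγ0.le
  have hfix' : ∀ (y : MinProf S A) (z : MaxProf S B) (s : S),
      RegAux.G r P γ h (V y z) s (y.1 s) (z.1 s) = V y z s := fun y z s =>
    congrFun (hfix y z) s
  have hsad := fun (Vv : S → ℝ) (s : S) =>
    RegAux.exists_saddle r P γ h hcont hμ₁ hμ₂ hconv hconc Vv s
  choose sad hs1 hs2 hs3 hs4 using hsad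
  set Φ : (S → ℝ) → (S → ℝ) :=
    fun Vv s => RegAux.G r P γ h Vv s (sad Vv s).1 (sad Vv s).2 with hΦdef
  have hΦlip : ∀ V1 V2 : S → ℝ, ∀ s, |Φ V1 s - Φ V2 s| ≤ γ * dist V1 V2 := by
    intro V1 V2 s
    have hd1 : ∀ s', V1 s' - V2 s' ≤ dist V1 V2 := by
      intro s'
      have := dist_le_pi_dist V1 V2 s'
      rw [Real.dist_eq] at this
      linarith [(abs_le.mp this).2]
    have hd2 : ∀ s', V2 s' - V1 s' ≤ dist V1 V2 := by
      intro s'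
      have := dist_le_pi_dist V1 V2 s'
      rw [Real.dist_eq] at this
      linarith [(abs_le.mp this).1]
    have a1 : Φ V1 s ≤ RegAux.G r P γ h V1 s (sad V2 s).1 (sad V1 s).2 :=
      hs3 V1 s _ (hs1 V2 s)
    have a2 : RegAux.G r P γ h V2 s (sad V2 s).1 (sad V1 s).2 ≤ Φ V2 s :=
      hs4 V2 s _ (hs2 V1 s)
    have a3 := RegAux.G_diff_le r P hP0 hP1 hγ0' h (hs1 V2 s) (hs2 V1 s) hd1 s
    have b1 : Φ V2 s ≤ RegAux.G r P γ h V2 s (sad V1 s).1 (sad V2 s).2 :=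
      hs3 V2 s _ (hs1 V1 s)
    have b2 : RegAux.G r P γ h V1 s (sad V1 s).1 (sad V2 s).2 ≤ Φ V1 s :=
      hs4 V1 s _ (hs2 V2 s)
    have b3 := RegAux.G_diff_le r P hP0 hP1 hγ0' h (hs1 V1 s) (hs2 V2 s) hd2 s
    rw [abs_sub_le_iff]
    constructor <;> linarith
  have hlip : LipschitzWith ⟨γ, hγ0'⟩ Φ := by
    apply LipschitzWith.of_dist_le_mul
    intro V1 V2
    have hnn : (0:ℝ) ≤ γ * dist V1 V2 := mul_nonneg hγ0' dist_nonneg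
    have hgoal : dist (Φ V1) (Φ V2) ≤ γ * dist V1 V2 := by
      rw [dist_pi_le_iff hnn]
      intro s
      rw [Real.dist_eq]
      exact hΦlip V1 V2 s
    exact hgoal
  have hcontr : ContractingWith ⟨γ, hγ0'⟩ Φ := ⟨by exact_mod_cast hγ1, hlip⟩
  set Vst := ContractingWith.fixedPoint Φ hcontr with hVstdef
  have hVstfixfun : Φ Vst = Vst := hcontr.fixedPoint_isFixedPt
  have hVstfix : ∀ s, RegAux.G r P γ h Vst s (sad Vst s).1 (sad Vst s).2 = Vst s :=
    fun s => congrFun hVstfixfun s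
  set yst : MinProf S A := ⟨fun s => (sad Vst s).1, fun s => hs1 Vst s⟩ with hystdef
  set zst : MaxProf S B := ⟨fun s => (sad Vst s).2, fun s => hs2 Vst s⟩ with hzstdef
  have hub : ∀ (z : MaxProf S B) (s : S), V yst z s ≤ Vst s := by
    intro z
    refine RegAux.fix_le r P hP0 hP1 hγ0' hγ1 h yst.2 z.2 (hfix' yst z) ?_
    intro s
    have := hs4 Vst s (z.1 s) (z.2 s)
    rw [hVstfix s] at this
    exact this
  have hlb : ∀ (y : MinProf S A) (s : S), Vst s ≤ V y zst s := by
    intro y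
    refine RegAux.le_fix r P hP0 hP1 hγ0' hγ1 h y.2 zst.2 (hfix' y zst) ?_
    intro s
    have := hs3 Vst s (y.1 s) (y.2 s)
    rw [hVstfix s] at this
    exact this
  have hVyzst : ∀ s, V yst zst s = Vst s := fun s => le_antisymm (hub zst s) (hlb yst s)
  have hsadprop : ∀ (y : MinProf S A) (z : MaxProf S B),
      (∑ s, ρ s * V (yst, zst).1 z s) ≤ (∑ s, ρ s * V (yst, zst).1 (yst, zst).2 s) ∧
      (∑ s, ρ s * V (yst, zst).1 (yst, zst).2 s) ≤ (∑ s, ρ s * V y (yst, zst).2 s) := by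
    intro y z
    constructor
    · refine Finset.sum_le_sum fun s _ => mul_le_mul_of_nonneg_left ?_ (hρ.1 s)
      exact (hub z s).trans (le_of_eq (hVyzst s).symm)
    · refine Finset.sum_le_sum fun s _ => mul_le_mul_of_nonneg_left ?_ (hρ.1 s)
      exact (le_of_eq (hVyzst s)).trans (hlb y s)
  have hpt : ∀ f g : S → ℝ, (∀ s, f s ≤ g s) →
      (∑ s, ρ s * f s) = (∑ s, ρ s * g s) → ∀ s, f s = g s := by
    intro f g hle hsum s
    by_contra hne
    have hlt : f s < g s := lt_of_le_of_ne (hle s) hne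
    have hstrict : (∑ s, ρ s * f s) < ∑ s, ρ s * g s :=
      Finset.sum_lt_sum (fun i _ => mul_le_mul_of_nonneg_left (hle i) (hρ.1 i))
        ⟨s, Finset.mem_univ s, mul_lt_mul_of_pos_left hlt (hρpos s)⟩
    rw [hsum] at hstrict
    exact lt_irrefl _ hstrict
  constructor
  · refine ⟨(yst, zst), hsadprop, ?_⟩
    rintro ⟨q1, q2⟩ hq
    have d2 : (∑ s, ρ s * Vst s) ≤ ∑ s, ρ s * V q1 zst s :=
      Finset.sum_le_sum fun s _ => mul_le_mul_of_nonneg_left (hlb q1 s) (hρ.1 s)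
    have d1 : (∑ s, ρ s * V yst q2 s) ≤ ∑ s, ρ s * Vst s :=
      Finset.sum_le_sum fun s _ => mul_le_mul_of_nonneg_left (hub q2 s) (hρ.1 s)
    have d3 := (hq yst zst).1
    have d4 := (hq yst zst).2
    have hq1 : ∀ s, V q1 zst s = Vst s := fun s =>
      ((hpt Vst (V q1 zst) (hlb q1) (by linarith)) s).symm
    have hq2 : ∀ s, V yst q2 s = Vst s := fun s =>
      hpt (V yst q2) Vst (hub q2) (by linarith) s
    have hfq1 : ∀ s, RegAux.G r P γ h Vst s (q1.1 s) ((sad Vst s).2) = Vst s := by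
      intro s
      have hVeq : V q1 zst = Vst := funext hq1
      have := hfix' q1 zst s
      rw [hVeq] at this
      exact this
    have hfq2 : ∀ s, RegAux.G r P γ h Vst s ((sad Vst s).1) (q2.1 s) = Vst s := by
      intro s
      have hVeq : V yst q2 = Vst := funext hq2
      have := hfix' yst q2 s
      rw [hVeq] at this
      exact this
    have hq1e : q1 = yst := by
      refine Subtype.ext (funext fun s => ?_)
      have growth := RegAux.G_growth_u r P γ h (hconv s _ (hs2 Vst s)) Vst
        (q1.2 s) (hs1 Vst s) (hs3 Vst s)
      have e1 := hfq1 s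
      have e2 := hVstfix s
      have hsq : ‖q1.1 s - (sad Vst s).1‖^2 ≤ 0 := by nlinarith [growth, hμ₁]
      have hn : ‖q1.1 s - (sad Vst s).1‖ = 0 := by
        nlinarith [norm_nonneg (q1.1 s - (sad Vst s).1), hsq]
      exact sub_eq_zero.mp (norm_eq_zero.mp hn)
    have hq2e : q2 = zst := by
      refine Subtype.ext (funext fun s => ?_)
      have growth := RegAux.G_growth_w r P γ h (hconc s _ (hs1 Vst s)) Vst
        (q2.2 s) (hs2 Vst s) (hs4 Vst s)
      have e1 := hfq2 s
      have e2 := hVstfix s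
      have hsq : ‖q2.1 s - (sad Vst s).2‖^2 ≤ 0 := by nlinarith [growth, hμ₂]
      have hn : ‖q2.1 s - (sad Vst s).2‖ = 0 := by
        nlinarith [norm_nonneg (q2.1 s - (sad Vst s).2), hsq]
      exact sub_eq_zero.mp (norm_eq_zero.mp hn)
    rw [hq1e, hq2e]
  · intro p hp
    obtain ⟨R, hR⟩ : ∃ R, ∀ s a b, |r s a b| ≤ R := by
      obtain ⟨R, hR⟩ := (Set.finite_range (fun x : S × A × B => |r x.1 x.2.1 x.2.2|)).bddAbove
      exact ⟨R, fun s a b => hR (Set.mem_range_self (s, a, b))⟩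
    obtain ⟨H, hH⟩ : ∃ H, ∀ (s : S) (u : A → ℝ) (w : B → ℝ),
        u ∈ stdSimplex ℝ A → w ∈ stdSimplex ℝ B → |h s u w| ≤ H := by
      have hex : ∀ s : S, ∃ Hs, ∀ (u : A → ℝ) (w : B → ℝ),
          u ∈ stdSimplex ℝ A → w ∈ stdSimplex ℝ B → |h s u w| ≤ Hs := by
        intro s
        obtain ⟨Cs, hCs⟩ := ((isCompact_stdSimplex ℝ A).prod
          (isCompact_stdSimplex ℝ B)).exists_bound_of_continuousOn (hcont s).continuousOn
        exact ⟨Cs, fun u w hu hw => by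
          simpa [Real.norm_eq_abs] using hCs (u, w) (Set.mk_mem_prod hu hw)⟩
      choose Hf hHf using hex
      obtain ⟨H, hH⟩ := (Set.finite_range Hf).bddAbove
      exact ⟨H, fun s u w hu hw =>
        le_trans (hHf s u w hu hw) (hH (Set.mem_range_self s))⟩
    have hVb : ∀ (y : MinProf S A) (z : MaxProf S B) (s : S),
        |V y z s| ≤ (R + H)/(1 - γ) := by
      intro y z
      obtain ⟨s₀, -, hs₀⟩ := Finset.exists_max_image Finset.univ (fun s => |V y z s|)
        ⟨Classical.arbitrary S, Finset.mem_univ _⟩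
      have hm : ∀ s', |V y z s'| ≤ |V y z s₀| := fun s' => hs₀ s' (Finset.mem_univ _)
      have key : |RegAux.G r P γ h (V y z) s₀ (y.1 s₀) (z.1 s₀)|
          ≤ R + γ * |V y z s₀| + H :=
        RegAux.G_abs_le r P hP0 hP1 hγ0' h (y.2 s₀) (z.2 s₀) hm
          (fun a b => hR s₀ a b) (hH s₀ _ _ (y.2 s₀) (z.2 s₀))
      rw [hfix' y z s₀] at key
      intro s
      refine le_trans (hm s) ?_
      rw [le_div_iff₀ (by linarith)]
      linarith
    have hFb : ∀ (y : MinProf S A) (z : MaxProf S B),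
        |∑ s, ρ s * V y z s| ≤ (R + H)/(1 - γ) := by
      intro y z
      refine le_trans (Finset.abs_sum_le_sum_abs _ _) ?_
      calc ∑ s, |ρ s * V y z s| ≤ ∑ s, ρ s * ((R + H)/(1 - γ)) :=
            Finset.sum_le_sum fun s _ => by
              rw [abs_mul, abs_of_nonneg (hρ.1 s)]
              exact mul_le_mul_of_nonneg_left (hVb y z s) (hρ.1 s)
        _ = (R + H)/(1 - γ) := by rw [← Finset.sum_mul, hρ.2, one_mul]
    haveI : Nonempty (MinProf S A) := ⟨yst⟩
    haveI : Nonempty (MaxProf S B) := ⟨zst⟩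
    have hbddA : ∀ y : MinProf S A,
        BddAbove (Set.range fun z : MaxProf S B => ∑ s, ρ s * V y z s) :=
      fun y => ⟨(R + H)/(1 - γ), by rintro x ⟨z, rfl⟩; exact (abs_le.mp (hFb y z)).2⟩
    have hbddIy : ∀ z : MaxProf S B,
        BddBelow (Set.range fun y : MinProf S A => ∑ s, ρ s * V y z s) :=
      fun z => ⟨-((R + H)/(1 - γ)), by
        rintro x ⟨y, rfl⟩; exact (abs_le.mp (hFb y z)).1⟩
    have hbddIB : BddBelow (Set.range fun y : MinProf S A =>
        ⨆ z : MaxProf S B, ∑ s, ρ s * V y z s) := by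
      refine ⟨-((R + H)/(1 - γ)), ?_⟩
      rintro x ⟨y, rfl⟩
      exact le_trans ((abs_le.mp (hFb y p.2)).1) (le_ciSup (hbddA y) p.2)
    have hbddSB : BddAbove (Set.range fun z : MaxProf S B =>
        ⨅ y : MinProf S A, ∑ s, ρ s * V y z s) := by
      refine ⟨(R + H)/(1 - γ), ?_⟩
      rintro x ⟨z, rfl⟩
      exact le_trans (ciInf_le (hbddIy z) p.1) ((abs_le.mp (hFb p.1 z)).2)
    have h1 : ∀ z : MaxProf S B, (∑ s, ρ s * V p.1 z s) ≤ ∑ s, ρ s * V p.1 p.2 s :=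
      fun z => (hp yst z).1
    have h2 : ∀ y : MinProf S A, (∑ s, ρ s * V p.1 p.2 s) ≤ ∑ s, ρ s * V y p.2 s :=
      fun y => (hp y zst).2
    constructor
    · refine le_antisymm (le_ciInf fun y => le_trans (h2 y) (le_ciSup (hbddA y) p.2)) ?_
      exact ciInf_le_of_le hbddIB p.1 (ciSup_le h1)
    · refine le_antisymm ?_ (ciSup_le fun z => le_trans (ciInf_le (hbddIy z) p.1) (h1 z))
      exact le_ciSup_of_le hbddSB p.2 (le_ciInf h2)
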